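/- If A is a positive semidefinite matrix and B is Hermitian, then Pos(A ⊗ B) = A ⊗ Pos(B), where Pos denotes the positive part of a Hermitian matrix and ⊗ is the Kronecker (tensor) product. -/

import Mathlib

open scoped ComplexOrder

open Kronecker

open Matrix

lemma kron_conjTranspose {n m : ℕ} (A : Matrix (Fin n) (Fin n) ℂ)
    (B : Matrix (Fin m) (Fin m) ℂ) : (A ⊗ₖ B)ᴴ = Aᴴ ⊗ₖ Bᴴ := by
  ext ⟨i, j⟩ ⟨k, l⟩
  simp [Matrix.conjTranspose_apply, Matrix.kroneckerMap_apply]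

lemma kron_posSemidef {n m : ℕ} {A : Matrix (Fin n) (Fin n) ℂ}
    {B : Matrix (Fin m) (Fin m) ℂ} (hA : A.PosSemidef) (hB : B.PosSemidef) :
    (A ⊗ₖ B).PosSemidef := by
  exact hA.kronecker hB

/-- If `A ⪰ 0` and `B` is Hermitian, then `Pos(A ⊗ B) = A ⊗ Pos(B)`:
given the positive-part decomposition `B = Bp - Bn` (PSD, orthogonal supports)
and any positive-part decomposition `A ⊗ B = Cp - Cn`, one has `Cp = A ⊗ Bp`. -/
theorem stmt_1 {n m : ℕ} (A : Matrix (Fin n) (Fin n) ℂ)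
    (B Bp Bn : Matrix (Fin m) (Fin m) ℂ)
    (hA : A.PosSemidef) (hB : B.IsHermitian)
    (hBp : Bp.PosSemidef) (hBn : Bn.PosSemidef)
    (hdec : B = Bp - Bn) (horth : Bp * Bn = 0)
    (Cp Cn : Matrix (Fin n × Fin m) (Fin n × Fin m) ℂ)
    (hCp : Cp.PosSemidef) (hCn : Cn.PosSemidef)
    (hCdec : A ⊗ₖ B = Cp - Cn) (hCorth : Cp * Cn = 0) :
    Cp = A ⊗ₖ Bp := by
  set P := A ⊗ₖ Bp with hP
  set N := A ⊗ₖ Bn with hN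
  have hPpsd : P.PosSemidef := kron_posSemidef hA hBp
  have hNpsd : N.PosSemidef := kron_posSemidef hA hBn
  have horth' : Bn * Bp = 0 := by
    calc Bn * Bp = (Bp * Bn)ᴴ := by rw [Matrix.conjTranspose_mul, hBp.1, hBn.1]
    _ = 0 := by rw [horth]; simp
  have hCorth' : Cn * Cp = 0 := by
    calc Cn * Cp = (Cp * Cn)ᴴ := by rw [Matrix.conjTranspose_mul, hCp.1, hCn.1]
    _ = 0 := by rw [hCorth]; simp
  have hPN : P * N = 0 := by
    rw [hP, hN, ← Matrix.mul_kronecker_mul, horth]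
    ext ⟨i, j⟩ ⟨k, l⟩
    simp [Matrix.kroneckerMap_apply]
  have hNP : N * P = 0 := by
    rw [hP, hN, ← Matrix.mul_kronecker_mul, horth']
    ext ⟨i, j⟩ ⟨k, l⟩
    simp [Matrix.kroneckerMap_apply]
  have hdiff : Cp - Cn = P - N := by
    rw [← hCdec, hdec, hP, hN]
    ext ⟨i, j⟩ ⟨k, l⟩
    simp [Matrix.kroneckerMap_apply, mul_sub, Matrix.sub_apply]
  have hsq : (Cp + Cn) ^ 2 = (P + N) ^ 2 := by
    have e1 : (Cp + Cn) ^ 2 = (Cp - Cn) ^ 2 := by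
      ring_nf
      rw [pow_two, pow_two]
      noncomm_ring [hCorth, hCorth']
    have e2 : (P + N) ^ 2 = (P - N) ^ 2 := by
      ring_nf
      rw [pow_two, pow_two]
      noncomm_ring [hPN, hNP]
    rw [e1, e2, hdiff]
  have hsum : Cp + Cn = P + N := by
    open scoped MatrixOrder in
    exact (CFC.sq_eq_sq_iff _ _ (hCp.add hCn).nonneg (hPpsd.add hNpsd).nonneg).mp hsq
  have h3 : Cp + Cp = P + P := by
    calc Cp + Cp = (Cp + Cn) + (Cp - Cn) := by abel
    _ = (P + N) + (P - N) := by rw [hsum, hdiff]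
    _ = P + P := by abel
  have h4 : (2 : ℂ) • Cp = (2 : ℂ) • P := by
    rw [two_smul, two_smul]; exact h3
  exact smul_right_injective _ (two_ne_zero) h4
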